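/- Let r and s be any nonnegative rational numbers with r ≤ s. Then every rational number x with r ≤ x ≤ s appears in the tree T(r, s). -/
import Mathlib


/-- The mediant of two rationals `p` and `q`: `(num p + num q) / (den p + den q)`. -/
def mediant (p q : ℚ) : ℚ := ((p.num + q.num : ℤ) : ℚ) / ((p.den + q.den : ℕ) : ℚ)

/-- Insert between every pair of consecutive entries of a list their mediant. -/
def insertMediants : List ℚ → List ℚ
  | [] => []
  | [p] => [p]
  | p :: q :: rest => p :: mediant p q :: insertMediants (q :: rest)

/-- The sequences of the tree `T(r, s)`: `S r s 0 = [r, s]`, and each successive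
sequence is obtained by inserting mediants between consecutive entries. -/
def S (r s : ℚ) : ℕ → List ℚ
  | 0 => [r, s]
  | n + 1 => insertMediants (S r s n)

lemma rat_lt_cross {p q : ℚ} (h : p < q) : p.num * q.den < q.num * p.den := by
  rw [← Rat.num_div_den p, ← Rat.num_div_den q,
    div_lt_div_iff₀ (by positivity) (by positivity)] at h
  exact_mod_cast h

lemma insertMediants_head (b : ℚ) (rest : List ℚ) :
    ∃ t, insertMediants (b :: rest) = b :: t := by
  cases rest with
  | nil => exact ⟨[], rfl⟩
  | cons c l => exact ⟨_, rfl⟩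

lemma infix_insertMediants : ∀ {l : List ℚ} {p q : ℚ},
    [p, q] <:+: l → [p, mediant p q, q] <:+: insertMediants l := by
  intro l
  induction l with
  | nil => intro p q h; exact absurd h.length_le (by simp)
  | cons a l ih =>
    intro p q h
    cases l with
    | nil =>
      exact absurd h.length_le (by simp)
    | cons b rest =>
      rw [List.infix_cons_iff] at h
      rcases h with h | h
      · rw [List.cons_prefix_cons] at h
        obtain ⟨rfl, h⟩ := h
        rw [List.cons_prefix_cons] at h
        obtain ⟨rfl, -⟩ := h
        obtain ⟨t, ht⟩ := insertMediants_head q rest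
        refine (List.prefix_iff_eq_take.mpr ?_).isInfix
        show [p, mediant p q, q] = List.take 3 (p :: mediant p q :: insertMediants (q :: rest))
        rw [ht]
        rfl
      · exact ((ih h).trans (List.suffix_cons (mediant a b) _).isInfix).trans
          (List.suffix_cons a _).isInfix

lemma infix_S {r s : ℚ} {p q : ℚ} {n : ℕ} (h : [p, q] <:+: S r s n) :
    [p, mediant p q, q] <:+: S r s (n + 1) :=
  infix_insertMediants h

lemma key (x : ℚ) (r s : ℚ) : ∀ N : ℕ, ∀ p q : ℚ, ∀ n : ℕ,
    [p, q] <:+: S r s n → p < x → x < q →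
    ((x.num * p.den - p.num * x.den) + (q.num * x.den - x.num * q.den)).toNat ≤ N →
    ∃ m, x ∈ S r s m := by
  intro N
  induction N with
  | zero =>
    intro p q n _ hpx hxq hN
    have hA : 1 ≤ x.num * p.den - p.num * x.den := by
      have := rat_lt_cross hpx; omega
    have hB : 1 ≤ q.num * x.den - x.num * q.den := by
      have := rat_lt_cross hxq; omega
    omega
  | succ N ih =>
    intro p q n hinf hpx hxq hN
    set m := mediant p q with hm
    have h3 := infix_S hinf
    have hpm : [p, m] <:+: S r s (n + 1) := by
      refine List.IsInfix.trans ?_ h3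
      exact ⟨[], [q], rfl⟩
    have hmq : [m, q] <:+: S r s (n + 1) := by
      refine List.IsInfix.trans ?_ h3
      exact ⟨[p], [], rfl⟩
    -- basic facts about m
    set c : ℤ := p.num + q.num with hc
    set d : ℤ := (p.den : ℤ) + (q.den : ℤ) with hd
    have hd0 : 0 < d := by positivity
    have hmval : m = (c : ℚ) / (d : ℚ) := by
      rw [hm, mediant, hc, hd]; push_cast; ring
    have hcross : (m.num : ℤ) * d = c * m.den := by
      have h0 : (m.num : ℚ) / (m.den : ℚ) = (c : ℚ) / (d : ℚ) := by
        rw [Rat.num_div_den, hmval]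
      rw [div_eq_div_iff (by positivity) (by positivity)] at h0
      exact_mod_cast h0
    rw [hc, hd] at hcross
    have hmd : m = Rat.divInt c d := by rw [hmval, Rat.divInt_eq_div]
    have hdvd : (m.den : ℤ) ∣ d := by rw [hmd]; exact Rat.den_dvd c d
    have hdm : (m.den : ℤ) ≤ d := Int.le_of_dvd hd0 hdvd
    have hmden1 : (1 : ℤ) ≤ (m.den : ℤ) := by exact_mod_cast m.pos
    have hA : 1 ≤ x.num * p.den - p.num * x.den := by
      have := rat_lt_cross hpx; omega
    have hB : 1 ≤ q.num * x.den - x.num * q.den := by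
      have := rat_lt_cross hxq; omega
    rcases lt_trichotomy x m with hxm | hxm | hxm
    · -- x < m : recurse on (p, m)
      have hB' : 1 ≤ m.num * x.den - x.num * m.den := by
        have := rat_lt_cross hxm; omega
      have heq : (m.num * x.den - x.num * m.den) * d =
          ((q.num * x.den - x.num * q.den) - (x.num * p.den - p.num * x.den)) * m.den := by
        linear_combination (x.den : ℤ) * hcross
      have hle : m.num * x.den - x.num * m.den ≤
          (q.num * x.den - x.num * q.den) - (x.num * p.den - p.num * x.den) := by
        nlinarith [heq, hB', hdm, hmden1]
      refine ih p m (n + 1) hpm hpx hxm ?_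
      omega
    · exact ⟨n + 1, hpm.subset (by simp [hxm])⟩
    · -- m < x : recurse on (m, q)
      have hA' : 1 ≤ x.num * m.den - m.num * x.den := by
        have := rat_lt_cross hxm; omega
      have heq : (x.num * m.den - m.num * x.den) * d =
          ((x.num * p.den - p.num * x.den) - (q.num * x.den - x.num * q.den)) * m.den := by
        linear_combination (-(x.den : ℤ)) * hcross
      have hle : x.num * m.den - m.num * x.den ≤
          (x.num * p.den - p.num * x.den) - (q.num * x.den - x.num * q.den) := by
        nlinarith [heq, hA', hdm, hmden1]
      refine ih m q (n + 1) hmq hxm hxq ?_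
      omega

/-- For any nonnegative rationals `r ≤ s`, every rational `x` with `r ≤ x ≤ s` appears
in the tree `T(r, s)`. -/
theorem appears_of_mem_interval (r s : ℚ) (hr : 0 ≤ r) (hrs : r ≤ s)
    (x : ℚ) (hx1 : r ≤ x) (hx2 : x ≤ s) :
    ∃ n, x ∈ S r s n := by
  rcases eq_or_lt_of_le hx1 with rfl | hx1
  · exact ⟨0, by simp [S]⟩
  rcases eq_or_lt_of_le hx2 with rfl | hx2
  · exact ⟨0, by simp [S]⟩
  exact key x r s _ r s 0 (List.infix_refl _) hx1 hx2 le_rfl
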